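/- Let F be a tiered forest with two tiers on vertex set U, let CT(F) be the complete tiered graph on U determined by the tier partition of F, and let F' be the dual forest with CT(F') the complete tiered graph determined by F'. With ω_1(e) = u + v/N for an edge joining u < v, and ω_2(e) = (N+1−v) + (N+1−u)/N (where N = max U), the external activity of F in CT(F) with respect to ω_1 equals the external activity of F' in CT(F') with respect to ω_2. -/

import Mathlib

open Finset

attribute [local instance 10] Classical.propDecidable

noncomputable section

/-- An edge of a simple graph on `ℕ`, stored as an ordered pair `(u,v)` with `u < v` intended. -/
abbrev PEdge : Type := ℕ × ℕ

/-- A labelled edge (for multigraphs): an endpoint pair together with a label. -/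
abbrev LEdge : Type := (ℕ × ℕ) × ℕ

def adjP (E : Finset PEdge) (u v : ℕ) : Prop := (u, v) ∈ E ∨ (v, u) ∈ E

def reachP (E : Finset PEdge) : ℕ → ℕ → Prop := Relation.ReflTransGen (adjP E)

def connP (V : Finset ℕ) (E : Finset PEdge) : Prop :=
  (∀ e ∈ E, e.1 ∈ V ∧ e.2 ∈ V) ∧ ∀ u ∈ V, ∀ v ∈ V, reachP E u v

def IsTreeOn (V : Finset ℕ) (E : Finset PEdge) : Prop := connP V E ∧ E.card + 1 = V.card

/-- A graph on a finite set of naturals together with a tiering map. -/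
structure PreGraph where
  V : Finset ℕ
  E : Finset PEdge
  t : ℕ → ℕ

/-- `G` is a tiered graph with two tiers. -/
def IsTiered (G : PreGraph) : Prop :=
  (∀ v ∈ G.V, 0 < v) ∧
  (∀ e ∈ G.E, e.1 ∈ G.V ∧ e.2 ∈ G.V ∧ e.1 < e.2) ∧
  (∀ v ∈ G.V, G.t v = 1 ∨ G.t v = 2) ∧
  (∀ e ∈ G.E, G.t e.1 < G.t e.2)

/-- acyclicity: every edge is a bridge. -/
def IsForest (G : PreGraph) : Prop := ∀ e ∈ G.E, ¬ reachP (G.E.erase e) e.1 e.2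

def IsTreeG (G : PreGraph) : Prop := IsTreeOn G.V G.E

/-- the connected component (vertex set) of `x`. -/
def comp (V : Finset ℕ) (E : Finset PEdge) (x : ℕ) : Finset ℕ :=
  V.filter fun y => reachP E x y

/-- the order-reversing involution `x_i ↦ x_{s+1-i}` of a finite set `V = {x_1 < ... < x_s}`. -/
def flipMap (V : Finset ℕ) (x : ℕ) : ℕ :=
  if hx : x ∈ V then
    ((V.orderIsoOfFin rfl)
      ⟨V.card - 1 - ((V.orderIsoOfFin rfl).symm ⟨x, hx⟩).1, by
        have h := ((V.orderIsoOfFin rfl).symm ⟨x, hx⟩).isLt; omega⟩).1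
  else x

/-- the dual of a (connected) tiered graph, via the global vertex ordering. -/
def dual (G : PreGraph) : PreGraph where
  V := G.V
  E := G.E.image fun e => (flipMap G.V e.2, flipMap G.V e.1)
  t := fun x => if x ∈ G.V then 3 - G.t (flipMap G.V x) else G.t x

/-- the componentwise dual of a (possibly disconnected) tiered graph. -/
def cdual (G : PreGraph) : PreGraph where
  V := G.V
  E := G.E.image fun e => (flipMap (comp G.V G.E e.1) e.2, flipMap (comp G.V G.E e.1) e.1)
  t := fun x => if x ∈ G.V then 3 - G.t (flipMap (comp G.V G.E x) x) else G.t x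

/-- the recursive weight of a tiered tree (fuel-based implementation; the recursion
depth is bounded by the number of vertices). -/
def weightAux : ℕ → PreGraph → ℕ
  | 0, _ => 0
  | fuel + 1, T =>
    if h : 2 ≤ T.V.card then
      let v := T.V.min' (Finset.card_pos.mp (by omega))
      let V' := T.V.erase v
      let E' := T.E.filter fun e => e.1 ≠ v ∧ e.2 ≠ v
      ∑ u ∈ V'.filter (fun u => adjP T.E v u),
        (((comp V' E' u).filter fun y => y < u ∧ T.t v < T.t y).card
          + weightAux fuel ⟨comp V' E' u, E'.filter fun e => e.1 ∈ comp V' E' u, T.t⟩)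
    else 0

def weight (T : PreGraph) : ℕ := weightAux T.V.card T

/-- edges of a complete tiered graph with tier 1 vertex set `A` and tier 2 vertex set `B`. -/
def ctE2 (A B : Finset ℕ) : Finset PEdge := (A ×ˢ B).filter fun e => e.1 < e.2

/-- the edge set of the complete tiered graph determined by a two-tier tiered graph `G`. -/
def ctE (G : PreGraph) : Finset PEdge :=
  ctE2 (G.V.filter fun v => G.t v = 1) (G.V.filter fun v => G.t v = 2)

/-- edge set of the complete tiered graph on `[n]` determined by a tiering map `t`. -/
def ctEM (n : ℕ) (t : ℕ → ℕ) : Finset PEdge :=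
  (Finset.Icc 1 n ×ˢ Finset.Icc 1 n).filter fun e => e.1 < e.2 ∧ t e.1 < t e.2

def extActiveP (T : Finset PEdge) (ω : PEdge → ℝ) (e : PEdge) : Prop :=
  e ∉ T ∧ reachP T e.1 e.2 ∧ ∀ e' ∈ T, ¬ reachP (T.erase e') e.1 e.2 → ω e < ω e'

/-- external activity of the spanning forest `T` in the graph with edge set `E`. -/
def eaP (E T : Finset PEdge) (ω : PEdge → ℝ) : ℕ := (E.filter (extActiveP T ω)).card

def adjL (E : Finset LEdge) (u v : ℕ) : Prop := ∃ e ∈ E, e.1 = (u, v) ∨ e.1 = (v, u)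
def reachL (E : Finset LEdge) : ℕ → ℕ → Prop := Relation.ReflTransGen (adjL E)
def connL (V : Finset ℕ) (E : Finset LEdge) : Prop := ∀ u ∈ V, ∀ v ∈ V, reachL E u v
def IsLTree (V : Finset ℕ) (T : Finset LEdge) : Prop := connL V T ∧ T.card + 1 = V.card

def extActiveL (T : Finset LEdge) (ω : LEdge → ℝ) (e : LEdge) : Prop :=
  e ∉ T ∧ reachL T e.1.1 e.1.2 ∧ ∀ e' ∈ T, ¬ reachL (T.erase e') e.1.1 e.1.2 → ω e < ω e'

def eaL (E T : Finset LEdge) (ω : LEdge → ℝ) : ℕ := (E.filter (extActiveL T ω)).card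

def omega1 (N : ℕ) (e : PEdge) : ℝ := (e.1 : ℝ) + (e.2 : ℝ) / (N : ℝ)
def omega2 (N : ℕ) (e : PEdge) : ℝ := ((N + 1 - e.2 : ℕ) : ℝ) + ((N + 1 - e.1 : ℕ) : ℝ) / (N : ℝ)
def omegaLex (n : ℕ) (e : PEdge) : ℝ := ((e.1 * (n + 1) + e.2 : ℕ) : ℝ)

/-- representative (minimum) of the component of `x` in the forest `F` on vertex set `V`. -/
def rep (V : Finset ℕ) (F : Finset LEdge) (x : ℕ) : ℕ :=
  if hx : x ∈ V then
    (V.filter fun y => reachL F x y).min'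
      ⟨x, Finset.mem_filter.mpr ⟨hx, Relation.ReflTransGen.refl⟩⟩
  else x

/-- image of an edge in the quotient graph `G • F`; the label encodes the original edge. -/
def quotEdge (ρ : ℕ → ℕ) (e : LEdge) : LEdge :=
  ((ρ e.1.1, ρ e.1.2), Nat.pair (Nat.pair e.1.1 e.1.2) e.2)

/-- recover the original edge from a quotient edge. -/
def decodeE (e : LEdge) : LEdge :=
  (((Nat.unpair (Nat.unpair e.2).1).1, (Nat.unpair (Nat.unpair e.2).1).2), (Nat.unpair e.2).2)

/-- tiering map on `[n]` induced by `f : Fin n → Fin m` (tiers `1,...,m`). -/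
def tf (n m : ℕ) (f : Fin n → Fin m) : ℕ → ℕ := fun v =>
  if h : v ∈ Finset.Icc 1 n then
    (f ⟨v - 1, by have := Finset.mem_Icc.mp h; omega⟩).1 + 1
  else 0

/-- `G` is a tiered graph with `m` tiers. -/
def IsTieredM (m : ℕ) (G : PreGraph) : Prop :=
  (∀ e ∈ G.E, e.1 ∈ G.V ∧ e.2 ∈ G.V ∧ e.1 < e.2) ∧
  (∀ v ∈ G.V, G.t v ∈ Finset.Icc 1 m) ∧
  (∀ e ∈ G.E, G.t e.1 < G.t e.2) ∧
  (∀ i ∈ Finset.Icc 1 m, ∃ v ∈ G.V, G.t v = i)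

/-- weight polynomial `P_p(q)` (recursive weight), evaluated at `q`. -/
def Pw (n m : ℕ) (p : ℕ → ℕ) (q : ℤ) : ℤ :=
  ∑ f : Fin n → Fin m,
    ∑ E ∈ ((Finset.Icc 1 n ×ˢ Finset.Icc 1 n).powerset.filter fun E =>
        IsTreeG ⟨Finset.Icc 1 n, E, tf n m f⟩ ∧ IsTieredM m ⟨Finset.Icc 1 n, E, tf n m f⟩ ∧
        ∀ i ∈ Finset.Icc 1 m, ((Finset.Icc 1 n).filter fun v => tf n m f v = i).card = p i),
      q ^ weight ⟨Finset.Icc 1 n, E, tf n m f⟩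

/-- weight polynomial `P_p(q)` with the weight of a tiered tree given by its external
activity in the complete tiered graph it determines (lexicographic edge order). -/
def PwEA (n m : ℕ) (p : ℕ → ℕ) (q : ℤ) : ℤ :=
  ∑ f : Fin n → Fin m,
    ∑ E ∈ ((Finset.Icc 1 n ×ˢ Finset.Icc 1 n).powerset.filter fun E =>
        IsTreeG ⟨Finset.Icc 1 n, E, tf n m f⟩ ∧ IsTieredM m ⟨Finset.Icc 1 n, E, tf n m f⟩ ∧
        ∀ i ∈ Finset.Icc 1 m, ((Finset.Icc 1 n).filter fun v => tf n m f v = i).card = p i),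
      q ^ eaP (ctEM n (tf n m f)) E (omegaLex n)

/-- `T^c_G(y)`: the Tutte evaluation `T_G(1,y)` (spanning tree expansion) for a connected
graph, `0` otherwise. -/
def TcP (V : Finset ℕ) (E : Finset PEdge) (ω : PEdge → ℝ) (y : ℤ) : ℤ :=
  if connP V E then ∑ T ∈ E.powerset.filter (fun T => IsTreeOn V T), y ^ eaP E T ω else 0

/-- edge multiset of `H ∪ Q_S`: `H`-edges (labels `≠ 0`) together with the complete
tiered graph on `U` with tier-1 set `S` (labelled `0`). -/
def qE (U : Finset ℕ) (EH : Finset LEdge) (S : Finset ℕ) : Finset LEdge :=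
  EH ∪ (ctE2 S (U \ S)).image fun p => (p, 0)

/-- `(S,T) ↦ (S*, T*)`: the dual quasi-tiered tree. -/
def dualTree (U : Finset ℕ) (ST : Finset ℕ × Finset LEdge) : Finset ℕ × Finset LEdge :=
  (U.filter fun v =>
      (cdual ⟨U, (ST.2.filter fun e => e.2 = 0).image Prod.fst,
        fun w => if w ∈ ST.1 then 1 else 2⟩).t v = 1,
   (ST.2.filter fun e => e.2 ≠ 0) ∪
     (cdual ⟨U, (ST.2.filter fun e => e.2 = 0).image Prod.fst,
        fun w => if w ∈ ST.1 then 1 else 2⟩).E.image fun p => (p, 0))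

/-- tiered forests on `U` with tier sizes `(p1, p2)` (tier map normalised off `U`). -/
def ForestSet (U : Finset ℕ) (p1 p2 : ℕ) : Set PreGraph :=
  {F | F.V = U ∧ IsTiered F ∧ IsForest F ∧
    (U.filter fun v => F.t v = 1).card = p1 ∧
    (U.filter fun v => F.t v = 2).card = p2 ∧
    ∀ v, v ∉ U → F.t v = 0}
/-! ### Auxiliary lemmas for stmt10 -/

lemma adjP_symm {E : Finset PEdge} {u v : ℕ} (h : adjP E u v) : adjP E v u := h.symm

lemma reachP_symm {E : Finset PEdge} {u v : ℕ} (h : reachP E u v) : reachP E v u :=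
  (@Relation.ReflTransGen.stdSymm _ (adjP E) ⟨fun _ _ h => adjP_symm h⟩).symm _ _ h

lemma reachP_trans {E : Finset PEdge} {u v w : ℕ} (h1 : reachP E u v) (h2 : reachP E v w) :
    reachP E u w := h1.trans h2

lemma adjP_of_mem {E : Finset PEdge} {e : PEdge} (he : e ∈ E) : adjP E e.1 e.2 := Or.inl he

lemma reachP_of_adj {E : Finset PEdge} {u v : ℕ} (h : adjP E u v) : reachP E u v :=
  Relation.ReflTransGen.single h

lemma reachP_mono {E E' : Finset PEdge} (hEE : E ⊆ E') {u v : ℕ} (h : reachP E u v) :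
    reachP E' u v := by
  refine Relation.ReflTransGen.mono (fun a b hab => ?_) _ _ h
  rcases hab with h | h
  · exact Or.inl (hEE h)
  · exact Or.inr (hEE h)

lemma mem_comp {V : Finset ℕ} {E : Finset PEdge} {x y : ℕ} :
    y ∈ comp V E x ↔ y ∈ V ∧ reachP E x y := Finset.mem_filter

lemma comp_eq_of_reach {V : Finset ℕ} {E : Finset PEdge} {x y : ℕ} (h : reachP E x y) :
    comp V E x = comp V E y := by
  ext z
  simp only [mem_comp]
  exact ⟨fun ⟨hz, hr⟩ => ⟨hz, (reachP_symm h).trans hr⟩, fun ⟨hz, hr⟩ => ⟨hz, h.trans hr⟩⟩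

/-! flipMap lemmas -/

lemma flipMap_mem {V : Finset ℕ} {x : ℕ} (hx : x ∈ V) : flipMap V x ∈ V := by
  rw [flipMap, dif_pos hx]
  exact ((V.orderIsoOfFin rfl) _).2

lemma flipMap_eq (V : Finset ℕ) {x : ℕ} (hx : x ∈ V) :
    flipMap V x = ((V.orderIsoOfFin rfl)
      ⟨V.card - 1 - ((V.orderIsoOfFin rfl).symm ⟨x, hx⟩).1, by
        have h := ((V.orderIsoOfFin rfl).symm ⟨x, hx⟩).isLt; omega⟩).1 := by
  rw [flipMap, dif_pos hx]

lemma flipMap_invol {V : Finset ℕ} {x : ℕ} (hx : x ∈ V) :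
    flipMap V (flipMap V x) = x := by
  have hmem := flipMap_mem hx
  rw [flipMap_eq V hmem]
  have h1 : (⟨flipMap V x, hmem⟩ : {y // y ∈ V}) = (V.orderIsoOfFin rfl)
      ⟨V.card - 1 - ((V.orderIsoOfFin rfl).symm ⟨x, hx⟩).1, by
        have h := ((V.orderIsoOfFin rfl).symm ⟨x, hx⟩).isLt; omega⟩ :=
    Subtype.ext (flipMap_eq V hx)
  have h2 : ((V.orderIsoOfFin rfl).symm ⟨flipMap V x, hmem⟩).1
      = V.card - 1 - ((V.orderIsoOfFin rfl).symm ⟨x, hx⟩).1 := by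
    rw [h1, OrderIso.symm_apply_apply]
  have hlt := ((V.orderIsoOfFin rfl).symm ⟨x, hx⟩).isLt
  have key : ∀ j : Fin V.card, (j : ℕ) = (((V.orderIsoOfFin rfl).symm ⟨x, hx⟩) : ℕ) →
      (((V.orderIsoOfFin rfl) j) : ℕ) = x := by
    intro j hj
    have hje : j = (V.orderIsoOfFin rfl).symm ⟨x, hx⟩ := Fin.ext hj
    rw [hje, OrderIso.apply_symm_apply]
  apply key
  simp only [h2]
  omega

lemma flipMap_lt_iff {V : Finset ℕ} {x y : ℕ} (hx : x ∈ V) (hy : y ∈ V) :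
    flipMap V y < flipMap V x ↔ x < y := by
  rw [flipMap_eq V hx, flipMap_eq V hy]
  set σ := V.orderIsoOfFin rfl with hσ
  have key : ∀ i j : Fin V.card, ((σ i : ℕ) < (σ j : ℕ)) ↔ i < j := by
    intro i j
    rw [Subtype.coe_lt_coe, σ.lt_iff_lt]
  rw [key]
  have hix := (σ.symm ⟨x, hx⟩).isLt
  have hiy := (σ.symm ⟨y, hy⟩).isLt
  have hxy : x < y ↔ (σ.symm ⟨x, hx⟩ : Fin V.card) < σ.symm ⟨y, hy⟩ := by
    rw [σ.symm.lt_iff_lt, Subtype.mk_lt_mk]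
  rw [hxy, Fin.mk_lt_mk, Fin.lt_def]
  have hix' := ((V.orderIsoOfFin rfl).symm ⟨x, hx⟩).isLt
  have hiy' := ((V.orderIsoOfFin rfl).symm ⟨y, hy⟩).isLt
  have hax : ((σ.symm ⟨x, hx⟩ : Fin V.card) : ℕ) = (((V.orderIsoOfFin rfl).symm ⟨x, hx⟩ : Fin V.card) : ℕ) := rfl
  have hay : ((σ.symm ⟨y, hy⟩ : Fin V.card) : ℕ) = (((V.orderIsoOfFin rfl).symm ⟨y, hy⟩ : Fin V.card) : ℕ) := rfl
  omega

/-! Phi : global componentwise flip -/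

def Phi (V : Finset ℕ) (E : Finset PEdge) (x : ℕ) : ℕ := flipMap (comp V E x) x

lemma Phi_mem_comp {V : Finset ℕ} {E : Finset PEdge} {x : ℕ} (hx : x ∈ V) :
    Phi V E x ∈ comp V E x :=
  flipMap_mem (mem_comp.mpr ⟨hx, Relation.ReflTransGen.refl⟩)

lemma Phi_reach {V : Finset ℕ} {E : Finset PEdge} {x : ℕ} (hx : x ∈ V) :
    reachP E x (Phi V E x) := (mem_comp.mp (Phi_mem_comp hx)).2

lemma Phi_mem {V : Finset ℕ} {E : Finset PEdge} {x : ℕ} (hx : x ∈ V) :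
    Phi V E x ∈ V := (mem_comp.mp (Phi_mem_comp hx)).1

lemma Phi_not_mem {V : Finset ℕ} {E : Finset PEdge} {x : ℕ} (hx : x ∉ V) :
    Phi V E x = x := by
  rw [Phi, flipMap, dif_neg]
  intro h
  exact hx (mem_comp.mp h).1

lemma Phi_invol {V : Finset ℕ} {E : Finset PEdge} (x : ℕ) :
    Phi V E (Phi V E x) = x := by
  by_cases hx : x ∈ V
  · have h1 : comp V E (Phi V E x) = comp V E x := comp_eq_of_reach (reachP_symm (Phi_reach hx))
    rw [Phi, h1]
    exact flipMap_invol (mem_comp.mpr ⟨hx, Relation.ReflTransGen.refl⟩)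
  · rw [Phi_not_mem hx, Phi_not_mem hx]

lemma Phi_inj {V : Finset ℕ} {E : Finset PEdge} : Function.Injective (Phi V E) :=
  Function.LeftInverse.injective (g := Phi V E) (fun x => Phi_invol x)

lemma Phi_lt {V : Finset ℕ} {E : Finset PEdge} {x y : ℕ} (hx : x ∈ V) (hy : y ∈ V)
    (hr : reachP E x y) : Phi V E y < Phi V E x ↔ x < y := by
  have hcomp : comp V E y = comp V E x := (comp_eq_of_reach hr).symm
  rw [Phi, Phi, hcomp]
  exact flipMap_lt_iff (mem_comp.mpr ⟨hx, Relation.ReflTransGen.refl⟩)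
    (mem_comp.mpr ⟨hy, hr⟩)

/-- flip of an edge. -/
def gE (V : Finset ℕ) (E : Finset PEdge) (e : PEdge) : PEdge := (Phi V E e.2, Phi V E e.1)

lemma gE_invol {V : Finset ℕ} {E : Finset PEdge} (e : PEdge) : gE V E (gE V E e) = e := by
  simp [gE, Phi_invol]

lemma gE_inj {V : Finset ℕ} {E : Finset PEdge} : Function.Injective (gE V E) :=
  Function.LeftInverse.injective (g := gE V E) (fun e => gE_invol e)

lemma adjP_image_gE {V : Finset ℕ} {E : Finset PEdge} (E' : Finset PEdge) (u v : ℕ) :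
    adjP (E'.image (gE V E)) u v ↔ adjP E' (Phi V E u) (Phi V E v) := by
  constructor
  · rintro (h | h) <;> rw [Finset.mem_image] at h <;> obtain ⟨e, he, heq⟩ := h
    · have h1 : Phi V E u = e.2 := by
        rw [show u = Phi V E e.2 from (congrArg Prod.fst heq).symm, Phi_invol]
      have h2 : Phi V E v = e.1 := by
        rw [show v = Phi V E e.1 from (congrArg Prod.snd heq).symm, Phi_invol]
      exact Or.inr (by rw [h1, h2]; exact he)
    · have h1 : Phi V E v = e.2 := by
        rw [show v = Phi V E e.2 from (congrArg Prod.fst heq).symm, Phi_invol]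
      have h2 : Phi V E u = e.1 := by
        rw [show u = Phi V E e.1 from (congrArg Prod.snd heq).symm, Phi_invol]
      exact Or.inl (by rw [h1, h2]; exact he)
  · rintro (h | h)
    · refine Or.inr (Finset.mem_image.mpr ⟨(Phi V E u, Phi V E v), h, ?_⟩)
      simp [gE, Phi_invol]
    · refine Or.inl (Finset.mem_image.mpr ⟨(Phi V E v, Phi V E u), h, ?_⟩)
      simp [gE, Phi_invol]

lemma reachP_image_gE {V : Finset ℕ} {E : Finset PEdge} (E' : Finset PEdge) (u v : ℕ) :
    reachP (E'.image (gE V E)) u v ↔ reachP E' (Phi V E u) (Phi V E v) := by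
  constructor
  · intro h
    exact Relation.ReflTransGen.lift (Phi V E)
      (fun a b hab => (adjP_image_gE E' a b).mp hab) _ _ h
  · intro h
    have := Relation.ReflTransGen.lift (Phi V E)
      (fun a b hab => by
        rw [← Phi_invol (V := V) (E := E) a, ← Phi_invol (V := V) (E := E) b] at hab
        exact (adjP_image_gE E' _ _).mpr hab) _ _ h
    rwa [Function.onFun, Phi_invol, Phi_invol] at this

lemma cdual_E (G : PreGraph) : (cdual G).E = G.E.image (gE G.V G.E) := by
  apply Finset.image_congr
  intro e he
  have : comp G.V G.E e.1 = comp G.V G.E e.2 :=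
    comp_eq_of_reach (reachP_of_adj (adjP_of_mem he))
  simp only [gE, Phi, this]

lemma mem_ctE {G : PreGraph} (e : PEdge) :
    e ∈ ctE G ↔ e.1 ∈ G.V ∧ e.2 ∈ G.V ∧ G.t e.1 = 1 ∧ G.t e.2 = 2 ∧ e.1 < e.2 := by
  simp only [ctE, ctE2, Finset.mem_filter, Finset.mem_product]
  tauto

/-! bridge lemma -/

lemma reach_erase_cases {E : Finset PEdge} {e₀ : PEdge} {u v : ℕ} (h : reachP E u v) :
    reachP (E.erase e₀) u v ∨ reachP E u e₀.1 ∨ reachP E u e₀.2 := by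
  induction h with
  | refl => exact Or.inl Relation.ReflTransGen.refl
  | tail hwx hstep IH =>
    rename_i w x
    rcases IH with IH | IH | IH
    · rcases hstep with hs | hs
      · by_cases hse : (w, x) = e₀
        · refine Or.inr (Or.inl ?_)
          have : w = e₀.1 := by rw [← hse]
          rw [← this]
          exact reachP_mono (Finset.erase_subset _ _) IH
        · exact Or.inl (IH.tail (Or.inl (Finset.mem_erase.mpr ⟨hse, hs⟩)))
      · by_cases hse : (x, w) = e₀
        · refine Or.inr (Or.inr ?_)
          have : w = e₀.2 := by rw [← hse]
          rw [← this]
          exact reachP_mono (Finset.erase_subset _ _) IH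
        · exact Or.inl (IH.tail (Or.inr (Finset.mem_erase.mpr ⟨hse, hs⟩)))
    · exact Or.inr (Or.inl IH)
    · exact Or.inr (Or.inr IH)

lemma reach_bridge {E : Finset PEdge} {e₀ : PEdge} {u v : ℕ} (he : e₀ ∈ E)
    (h1 : reachP E u v) (h2 : ¬ reachP (E.erase e₀) u v) :
    reachP E u e₀.1 ∧ reachP E u e₀.2 := by
  rcases reach_erase_cases (e₀ := e₀) h1 with h | h | h
  · exact absurd h h2
  · exact ⟨h, h.tail (adjP_of_mem he)⟩
  · exact ⟨h.tail (adjP_symm (adjP_of_mem he)), h⟩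

/-! weight lemmas -/

lemma nat_lex_lt {N p q r s : ℕ} (hq : 1 ≤ q) (hqN : q ≤ N) (hs : 1 ≤ s) (hsN : s ≤ N) :
    p * N + q < r * N + s ↔ p < r ∨ (p = r ∧ q < s) := by
  constructor
  · intro h
    rcases lt_trichotomy p r with hpr | hpr | hpr
    · exact Or.inl hpr
    · exact Or.inr ⟨hpr, by subst hpr; omega⟩
    · exfalso
      have h1 : r * N + N ≤ p * N := by
        have h' : (r + 1) * N ≤ p * N := Nat.mul_le_mul_right N (by omega)
        rwa [add_mul, one_mul] at h'
      omega
  · rintro (h | ⟨h1, h2⟩)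
    · have h1 : p * N + N ≤ r * N := by
        have h' : (p + 1) * N ≤ r * N := Nat.mul_le_mul_right N (by omega)
        rwa [add_mul, one_mul] at h'
      omega
    · subst h1; omega

lemma omega_lin_lt {N p q r s : ℕ} (hq : 1 ≤ q) (hqN : q ≤ N) (hs : 1 ≤ s) (hsN : s ≤ N) :
    ((p : ℝ) + (q : ℝ) / (N : ℝ) < (r : ℝ) + (s : ℝ) / (N : ℝ)) ↔
      (p < r ∨ (p = r ∧ q < s)) := by
  have hN : 0 < N := lt_of_lt_of_le hq hqN
  have hNR : (0 : ℝ) < (N : ℝ) := by exact_mod_cast hN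
  have e1 : (p : ℝ) + (q : ℝ) / (N : ℝ) = ((p * N + q : ℕ) : ℝ) / (N : ℝ) := by
    push_cast; field_simp
  have e2 : (r : ℝ) + (s : ℝ) / (N : ℝ) = ((r * N + s : ℕ) : ℝ) / (N : ℝ) := by
    push_cast; field_simp
  rw [e1, e2, div_lt_div_iff_of_pos_right hNR, Nat.cast_lt]
  exact nat_lex_lt hq hqN hs hsN
lemma cdual_t_eq (G : PreGraph) {x : ℕ} (hx : x ∈ G.V) :
    (cdual G).t x = 3 - G.t (Phi G.V G.E x) := by
  simp [cdual, Phi, hx]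

lemma weight_flip {F : PreGraph} (hT : IsTiered F) (hne : F.V.Nonempty)
    {u v a b : ℕ} (hu : u ∈ F.V) (hv : v ∈ F.V) (ha : a ∈ F.V) (hb : b ∈ F.V)
    (ruv : reachP F.E u v) (rua : reachP F.E u a) (rub : reachP F.E u b) :
    (omega1 (F.V.max' hne) (u, v) < omega1 (F.V.max' hne) (a, b) ↔
      omega2 (F.V.max' hne) (Phi F.V F.E v, Phi F.V F.E u) <
        omega2 (F.V.max' hne) (Phi F.V F.E b, Phi F.V F.E a)) := by
  set N := F.V.max' hne with hNdef
  have hbnd : ∀ x ∈ F.V, 1 ≤ x ∧ x ≤ N := fun x hx => ⟨hT.1 x hx, F.V.le_max' x hx⟩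
  obtain ⟨hu1, huN⟩ := hbnd u hu
  obtain ⟨hv1, hvN⟩ := hbnd v hv
  obtain ⟨ha1, haN⟩ := hbnd a ha
  obtain ⟨hb1, hbN⟩ := hbnd b hb
  obtain ⟨hpu1, hpuN⟩ := hbnd _ (Phi_mem (E := F.E) hu)
  obtain ⟨hpv1, hpvN⟩ := hbnd _ (Phi_mem (E := F.E) hv)
  obtain ⟨hpa1, hpaN⟩ := hbnd _ (Phi_mem (E := F.E) ha)
  obtain ⟨hpb1, hpbN⟩ := hbnd _ (Phi_mem (E := F.E) hb)
  have k1 : (N + 1 - Phi F.V F.E u < N + 1 - Phi F.V F.E a) ↔ u < a := by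
    rw [show (N + 1 - Phi F.V F.E u < N + 1 - Phi F.V F.E a) ↔
        Phi F.V F.E a < Phi F.V F.E u from by omega]
    exact Phi_lt hu ha rua
  have k2 : (N + 1 - Phi F.V F.E u = N + 1 - Phi F.V F.E a) ↔ u = a := by
    rw [show (N + 1 - Phi F.V F.E u = N + 1 - Phi F.V F.E a) ↔
        Phi F.V F.E u = Phi F.V F.E a from by omega]
    exact ⟨fun h => Phi_inj h, fun h => by rw [h]⟩
  have k3 : (N + 1 - Phi F.V F.E v < N + 1 - Phi F.V F.E b) ↔ v < b := by
    rw [show (N + 1 - Phi F.V F.E v < N + 1 - Phi F.V F.E b) ↔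
        Phi F.V F.E b < Phi F.V F.E v from by omega]
    exact Phi_lt hv hb ((reachP_symm ruv).trans rub)
  simp only [omega1, omega2]
  rw [omega_lin_lt hv1 hvN hb1 hbN,
      omega_lin_lt (by omega) (by omega) (by omega) (by omega), k1, k2, k3]
/-- for a tiered forest `F` with two tiers on `U`, the external activity
of `F` in `CT(F)` with respect to `ω₁` equals the external activity of the dual forest
`F'` in `CT(F')` with respect to `ω₂`. -/
theorem stmt10 (F : PreGraph) (hT : IsTiered F) (hF : IsForest F) (hne : F.V.Nonempty) :
    eaP (ctE F) F.E (omega1 (F.V.max' hne)) =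
      eaP (ctE (cdual F)) (cdual F).E (omega2 (F.V.max' hne)) := by
  classical
  set N := F.V.max' hne with hNdef
  have hcd : (cdual F).E = F.E.image (gE F.V F.E) := cdual_E F
  have htt : ∀ x ∈ F.V, F.t x = 1 ∨ F.t x = 2 := hT.2.2.1
  have hedge : ∀ e ∈ F.E, e.1 ∈ F.V ∧ e.2 ∈ F.V ∧ e.1 < e.2 := hT.2.1
  simp only [eaP]
  apply Finset.card_nbij' (gE F.V F.E) (gE F.V F.E)
  · -- forward
    intro e he
    rw [Finset.mem_coe, Finset.mem_filter] at he
    obtain ⟨hct, hext⟩ := he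
    simp only [extActiveP] at hext
    obtain ⟨hni, hr, hmin⟩ := hext
    rw [mem_ctE] at hct
    obtain ⟨hu, hv, ht1, ht2, hlt⟩ := hct
    rw [Finset.mem_coe, Finset.mem_filter]
    constructor
    · rw [mem_ctE]
      refine ⟨Phi_mem hv, Phi_mem hu, ?_, ?_, (Phi_lt hu hv hr).mpr hlt⟩
      · show (cdual F).t (Phi F.V F.E e.2) = 1
        rw [cdual_t_eq F (Phi_mem hv), Phi_invol, ht2]
      · show (cdual F).t (Phi F.V F.E e.1) = 2
        rw [cdual_t_eq F (Phi_mem hu), Phi_invol, ht1]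
    · simp only [extActiveP]
      refine ⟨?_, ?_, ?_⟩
      · intro hmem'
        rw [hcd] at hmem'
        obtain ⟨e₀, h₀, heq⟩ := Finset.mem_image.mp hmem'
        cases gE_inj heq
        exact hni h₀
      · show reachP (cdual F).E (gE F.V F.E e).1 (gE F.V F.E e).2
        rw [hcd]
        have h2 : reachP F.E (Phi F.V F.E (Phi F.V F.E e.2))
            (Phi F.V F.E (Phi F.V F.E e.1)) := by
          rw [Phi_invol, Phi_invol]; exact reachP_symm hr
        exact (reachP_image_gE F.E _ _).mpr h2
      · intro e' he' hnr
        rw [hcd] at he'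
        obtain ⟨e₀, h₀, rfl⟩ := Finset.mem_image.mp he'
        rw [hcd, ← Finset.image_erase gE_inj] at hnr
        have hnr' : ¬ reachP (F.E.erase e₀) e.1 e.2 := by
          intro h
          apply hnr
          have h2 : reachP (F.E.erase e₀) (Phi F.V F.E (Phi F.V F.E e.2))
              (Phi F.V F.E (Phi F.V F.E e.1)) := by
            rw [Phi_invol, Phi_invol]; exact reachP_symm h
          exact (reachP_image_gE _ _ _).mpr h2
        have hw := hmin e₀ h₀ hnr'
        obtain ⟨h01, h02, h0lt⟩ := hedge e₀ h₀
        obtain ⟨r1, r2⟩ := reach_bridge h₀ hr hnr'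
        exact (weight_flip hT hne hu hv h01 h02 hr r1 r2).mp hw
  · -- backward
    intro e he
    rw [Finset.mem_coe, Finset.mem_filter] at he
    obtain ⟨hct, hext⟩ := he
    simp only [extActiveP] at hext
    obtain ⟨hni, hr, hmin⟩ := hext
    rw [mem_ctE] at hct
    obtain ⟨hx, hy, ht1, ht2, hlt⟩ := hct
    have hx' : e.1 ∈ F.V := hx
    have hy' : e.2 ∈ F.V := hy
    have hrF : reachP F.E (Phi F.V F.E e.1) (Phi F.V F.E e.2) := by
      rw [hcd] at hr
      exact (reachP_image_gE F.E _ _).mp hr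
    have tΦ1 : F.t (Phi F.V F.E e.1) = 2 := by
      have h1 := cdual_t_eq F hx'
      rw [h1] at ht1
      rcases htt _ (Phi_mem (E := F.E) hx') with h | h <;> omega
    have tΦ2 : F.t (Phi F.V F.E e.2) = 1 := by
      have h1 := cdual_t_eq F hy'
      rw [h1] at ht2
      rcases htt _ (Phi_mem (E := F.E) hy') with h | h <;> omega
    have key : Phi F.V F.E (Phi F.V F.E e.2) < Phi F.V F.E (Phi F.V F.E e.1) ↔
        Phi F.V F.E e.1 < Phi F.V F.E e.2 := Phi_lt (Phi_mem hx') (Phi_mem hy') hrF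
    rw [Phi_invol, Phi_invol] at key
    have horder : Phi F.V F.E e.2 < Phi F.V F.E e.1 := by
      rcases lt_trichotomy (Phi F.V F.E e.2) (Phi F.V F.E e.1) with h | h | h
      · exact h
      · exact absurd (Phi_inj h) (by omega)
      · exact absurd (key.mpr h) (by omega)
    rw [Finset.mem_coe, Finset.mem_filter]
    refine ⟨?_, ?_⟩
    · rw [mem_ctE]
      exact ⟨Phi_mem hy', Phi_mem hx', tΦ2, tΦ1, horder⟩
    · simp only [extActiveP]
      refine ⟨?_, ?_, ?_⟩
      · intro hmem'
        apply hni
        rw [hcd]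
        have h2 := Finset.mem_image_of_mem (gE F.V F.E) hmem'
        rwa [gE_invol] at h2
      · exact reachP_symm hrF
      · intro e₀ h₀ hnr
        have hnr2 : ¬ reachP ((cdual F).E.erase (gE F.V F.E e₀)) e.1 e.2 := by
          intro h
          apply hnr
          rw [hcd, ← Finset.image_erase gE_inj] at h
          exact reachP_symm ((reachP_image_gE _ _ _).mp h)
        have hw := hmin (gE F.V F.E e₀)
          (by rw [hcd]; exact Finset.mem_image_of_mem _ h₀) hnr2
        obtain ⟨h01, h02, h0lt⟩ := hedge e₀ h₀
        obtain ⟨r1, r2⟩ := reach_bridge h₀ (reachP_symm hrF) hnr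
        have wf := weight_flip hT hne (Phi_mem hy') (Phi_mem hx') h01 h02
          (reachP_symm hrF) r1 r2
        rw [Phi_invol, Phi_invol] at wf
        exact wf.mpr hw
  · intro a _
    exact gE_invol a
  · intro a _
    exact gE_invol a

end
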